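/- Let n ≥ 3, let q ∈ ℂ be a primitive p-th root of unity with p ≥ 2m+1. Then the polynomial P = x_1^p - x_2^p is q-deformed m-quasi-invariant but not symmetric. -/

import Mathlib

open MvPolynomial

/-- `P` is `q`-deformed `m`-quasi-invariant. -/
def QDeformedQuasiInvariant (n : ℕ) (q : ℂ) (m : ℕ)
    (P : MvPolynomial (Fin n) ℂ) : Prop :=
  ∀ i j : Fin n, i ≠ j →
    (∏ l ∈ Finset.Icc (-(m : ℤ)) (m : ℤ), (X i - C (q ^ l) * X j))
      ∣ P - rename (Equiv.swap i j) P

lemma cprod_eq {p : ℕ} (hp : 0 < p) {q : ℂ} (hq : IsPrimitiveRoot q p) (x y : ℂ) :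
    ∏ l ∈ Finset.range p, (x - q ^ l * y) = x ^ p - y ^ p := by
  rw [hq.pow_sub_pow_eq_prod_sub_mul x y hp]
  have himg : Polynomial.nthRootsFinset p (1 : ℂ) = (Finset.range p).image (q ^ ·) := by
    ext ζ
    rw [Polynomial.mem_nthRootsFinset hp (1 : ℂ), Finset.mem_image]
    constructor
    · intro h
      have : NeZero p := ⟨hp.ne'⟩
      obtain ⟨i, hi, rfl⟩ := hq.eq_pow_of_pow_eq_one h
      exact ⟨i, Finset.mem_range.2 hi, rfl⟩
    · rintro ⟨i, _, rfl⟩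
      rw [← pow_mul, mul_comm, pow_mul, hq.pow_eq_one, one_pow]
  rw [himg, Finset.prod_image]
  intro a ha b hb hab
  exact hq.pow_inj (Finset.mem_range.1 ha) (Finset.mem_range.1 hb) hab

lemma key_dvd (n p m : ℕ) (hp : 2 * m + 1 ≤ p) (q : ℂ) (hq : IsPrimitiveRoot q p)
    (i j : Fin n) :
    (∏ l ∈ Finset.Icc (-(m : ℤ)) (m : ℤ), (X i - C (q ^ l) * X j))
      ∣ (X i ^ p - X j ^ p : MvPolynomial (Fin n) ℂ) := by
  have hppos : 0 < p := by omega
  have hq0 : q ≠ 0 := hq.ne_zero hppos.ne'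
  -- the full product equals X i ^ p - X j ^ p
  have hfull : (X i ^ p - X j ^ p : MvPolynomial (Fin n) ℂ)
      = ∏ k ∈ Finset.range p, (X i - C (q ^ k) * X j) := by
    apply MvPolynomial.funext
    intro x
    simp only [map_sub, map_pow, map_prod, eval_X, eval_mul, eval_C]
    rw [← cprod_eq hppos hq (x i) (x j)]
  -- rewrite zpow via mod
  have hzpow : ∀ l : ℤ, (q : ℂ) ^ l = q ^ (l % (p : ℤ)).toNat := by
    intro l
    have h1 : (l % (p : ℤ)).toNat = l % (p : ℤ) := by
      have := Int.emod_nonneg l (by exact_mod_cast hppos.ne' : (p : ℤ) ≠ 0)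
      omega
    conv_lhs => rw [← Int.mul_ediv_add_emod l (p : ℤ)]
    rw [zpow_add₀ hq0, zpow_mul, zpow_natCast, hq.pow_eq_one, one_zpow, one_mul,
      ← zpow_natCast q, h1]
  have hmod : ∀ l ∈ Finset.Icc (-(m : ℤ)) (m : ℤ),
      l % (p : ℤ) = if 0 ≤ l then l else l + p := by
    intro l hl
    simp only [Finset.mem_Icc] at hl
    split_ifs with h
    · exact Int.emod_eq_of_lt h (by omega)
    · rw [← Int.add_mul_emod_self_left (b := (p:ℤ)) (c := 1)]
      simp only [mul_one]
      exact Int.emod_eq_of_lt (by omega) (by omega)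
  -- reindex
  have himage : (∏ l ∈ Finset.Icc (-(m : ℤ)) (m : ℤ), (X i - C (q ^ l) * X j))
      = ∏ k ∈ (Finset.Icc (-(m : ℤ)) (m : ℤ)).image (fun l => (l % (p : ℤ)).toNat),
          ((X i : MvPolynomial (Fin n) ℂ) - C (q ^ k) * X j) := by
    rw [Finset.prod_image]
    · apply Finset.prod_congr rfl
      intro l _
      rw [hzpow l]
    · intro a ha b hb hab
      have h1 := hmod a ha
      have h2 := hmod b hb
      simp only [Finset.coe_Icc, Set.mem_Icc] at ha hb
      beta_reduce at hab
      omega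
  rw [himage, hfull]
  apply Finset.prod_dvd_prod_of_subset
  intro k hk
  simp only [Finset.mem_image] at hk
  obtain ⟨l, hl, rfl⟩ := hk
  have := hmod l hl
  simp only [Finset.mem_Icc] at hl
  simp only [Finset.mem_range]
  omega

theorem power_diff_qDeformed (n : ℕ) (hn : 3 ≤ n) (p m : ℕ) (hp : 2 * m + 1 ≤ p)
    (q : ℂ) (hq : IsPrimitiveRoot q p) :
    QDeformedQuasiInvariant n q m
        (X (⟨0, by omega⟩ : Fin n) ^ p - X (⟨1, by omega⟩ : Fin n) ^ p) ∧
      ¬ (X (⟨0, by omega⟩ : Fin n) ^ p - X (⟨1, by omega⟩ : Fin n) ^ p :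
          MvPolynomial (Fin n) ℂ).IsSymmetric := by
  have hppos : 0 < p := by omega
  set a : Fin n := ⟨0, by omega⟩
  set b : Fin n := ⟨1, by omega⟩
  have hab : a ≠ b := by simp [a, b, Fin.ext_iff]
  constructor
  · intro i j hij
    have hkey := key_dvd n p m hp q hq i j
    have hrw : rename (Equiv.swap i j) ((X a : MvPolynomial (Fin n) ℂ) ^ p - X b ^ p)
        = X (Equiv.swap i j a) ^ p - X (Equiv.swap i j b) ^ p := by
      simp [rename_X]
    rw [hrw]
    by_cases hia : i = a
    · by_cases hjb : j = b
      · rw [← hia, ← hjb, Equiv.swap_apply_left, Equiv.swap_apply_right]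
        have heq : (X i ^ p - X j ^ p) - ((X j : MvPolynomial (Fin n) ℂ) ^ p - X i ^ p)
            = 2 * (X i ^ p - X j ^ p) := by ring
        rw [heq]; exact hkey.mul_left 2
      · have hbi : b ≠ i := fun h => hab (hia ▸ h.symm ▸ rfl)
        have hbj : b ≠ j := fun h => hjb h.symm
        rw [← hia, Equiv.swap_apply_left, Equiv.swap_apply_of_ne_of_ne hbi hbj]
        have heq : (X i ^ p - X b ^ p) - ((X j : MvPolynomial (Fin n) ℂ) ^ p - X b ^ p)
            = 1 * (X i ^ p - X j ^ p) := by ring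
        rw [heq]; exact hkey.mul_left 1
    · by_cases hib : i = b
      · by_cases hja : j = a
        · rw [← hja, ← hib, Equiv.swap_apply_right, Equiv.swap_apply_left]
          have heq : (X j ^ p - X i ^ p) - ((X i : MvPolynomial (Fin n) ℂ) ^ p - X j ^ p)
              = (-2) * (X i ^ p - X j ^ p) := by ring
          rw [heq]; exact hkey.mul_left (-2)
        · have hai : a ≠ i := fun h => hia h.symm
          have haj : a ≠ j := fun h => hja h.symm
          rw [← hib, Equiv.swap_apply_of_ne_of_ne hai haj, Equiv.swap_apply_left]
          have heq : (X a ^ p - X i ^ p) - ((X a : MvPolynomial (Fin n) ℂ) ^ p - X j ^ p)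
              = (-1) * (X i ^ p - X j ^ p) := by ring
          rw [heq]; exact hkey.mul_left (-1)
      · by_cases hja : j = a
        · have hbi : b ≠ i := fun h => hib h.symm
          have hbj : b ≠ j := fun h => hab (by rw [hja] at h; exact h.symm)
          rw [← hja, Equiv.swap_apply_right, Equiv.swap_apply_of_ne_of_ne hbi hbj]
          have heq : (X j ^ p - X b ^ p) - ((X i : MvPolynomial (Fin n) ℂ) ^ p - X b ^ p)
              = (-1) * (X i ^ p - X j ^ p) := by ring
          rw [heq]; exact hkey.mul_left (-1)
        · by_cases hjb : j = b
          · have hai : a ≠ i := fun h => hia h.symm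
            have haj : a ≠ j := fun h => hja h.symm
            rw [← hjb, Equiv.swap_apply_of_ne_of_ne hai haj, Equiv.swap_apply_right]
            have heq : (X a ^ p - X j ^ p) - ((X a : MvPolynomial (Fin n) ℂ) ^ p - X i ^ p)
                = 1 * (X i ^ p - X j ^ p) := by ring
            rw [heq]; exact hkey.mul_left 1
          · rw [Equiv.swap_apply_of_ne_of_ne (fun h => hia h.symm) (fun h => hja h.symm),
              Equiv.swap_apply_of_ne_of_ne (fun h => hib h.symm) (fun h => hjb h.symm),
              sub_self]
            exact dvd_zero _
  · intro hsym
    have h := hsym (Equiv.swap a b)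
    have heval := congrArg (eval (fun k : Fin n => if k = a then (0 : ℂ) else 1)) h
    simp only [map_sub, map_pow, eval_rename, Function.comp, eval_X,
      Equiv.swap_apply_left, Equiv.swap_apply_right] at heval
    rw [if_neg (fun h => hab h.symm)] at heval
    simp only [if_true, one_pow, zero_pow hppos.ne', if_pos rfl] at heval
    norm_num at heval
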